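/- For every β > 0, the set {x = ⟨a_1, a_2, …⟩ ∈ (0,1] : lim_{n→∞} (log a_{n+1})/(log Q_n) = β} has Hausdorff dimension at most 1/(2 + β). -/

import Mathlib

/-- The Lüroth map L(x) = ⌊1/x⌋(⌊1/x⌋+1)x − ⌊1/x⌋, with L(0) = 0. -/
noncomputable def lurothL (x : ℝ) : ℝ :=
  if x = 0 then 0 else (⌊1 / x⌋ : ℝ) * ((⌊1 / x⌋ : ℝ) + 1) * x - (⌊1 / x⌋ : ℝ)

/-- The n-th Lüroth digit (1-indexed): a_n(x) = ⌊1/L^{n−1}(x)⌋ + 1. -/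
noncomputable def lurothDigit (n : ℕ) (x : ℝ) : ℕ :=
  (⌊1 / lurothL^[n - 1] x⌋).toNat + 1

/-- The n-th Lüroth continuant: Q_n = a_1(a_1−1)⋯a_{n−1}(a_{n−1}−1)a_n. -/
def lurothQ (a : ℕ → ℕ) (n : ℕ) : ℕ :=
  (∏ j ∈ Finset.Ico 1 n, a j * (a j - 1)) * a n

open Set Filter MeasureTheory

namespace LurothAux

lemma one_le_floor {x : ℝ} (hx : x ∈ Set.Ioc (0:ℝ) 1) : 1 ≤ ⌊1/x⌋ := by
  rw [Int.le_floor]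
  push_cast
  rw [le_div_iff₀ hx.1]
  simpa using hx.2

lemma floor_le_inv {x : ℝ} : (⌊1/x⌋ : ℝ) ≤ 1/x := Int.floor_le _

lemma inv_lt_floor {x : ℝ} : 1/x < (⌊1/x⌋ : ℝ) + 1 := Int.lt_floor_add_one _

lemma lurothL_mem {x : ℝ} (hx : x ∈ Set.Ioc (0:ℝ) 1) : lurothL x ∈ Set.Ioc (0:ℝ) 1 := by
  have hx0 := hx.1
  have hk1 : (1:ℝ) ≤ (⌊1/x⌋ : ℝ) := by exact_mod_cast one_le_floor hx
  have hlow : (⌊1/x⌋ : ℝ) * x ≤ 1 := by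
    have := floor_le_inv (x := x)
    rw [le_div_iff₀ hx0] at this; linarith
  have hhigh : 1 < ((⌊1/x⌋ : ℝ) + 1) * x := by
    have := inv_lt_floor (x := x)
    rw [div_lt_iff₀ hx0] at this; linarith
  rw [lurothL, if_neg (ne_of_gt hx0)]
  constructor
  · nlinarith
  · nlinarith

lemma lurothL_iterate_mem {x : ℝ} (hx : x ∈ Set.Ioc (0:ℝ) 1) (n : ℕ) :
    lurothL^[n] x ∈ Set.Ioc (0:ℝ) 1 := by
  induction n with
  | zero => simpa using hx
  | succ n ih => rw [Function.iterate_succ_apply']; exact lurothL_mem ih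

lemma digit_one_cast {x : ℝ} (hx : x ∈ Set.Ioc (0:ℝ) 1) :
    (lurothDigit 1 x : ℝ) = (⌊1/x⌋ : ℝ) + 1 := by
  have h := one_le_floor hx
  have h0 : ((⌊1/x⌋.toNat : ℕ) : ℝ) = ((⌊1/x⌋ : ℤ) : ℝ) := by
    exact_mod_cast Int.toNat_of_nonneg (by linarith : (0:ℤ) ≤ ⌊1/x⌋)
  simp only [lurothDigit, Nat.sub_self, Function.iterate_zero_apply, Nat.cast_add,
    Nat.cast_one, h0]

lemma two_le_digit {x : ℝ} (hx : x ∈ Set.Ioc (0:ℝ) 1) (n : ℕ) :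
    2 ≤ lurothDigit (n+1) x := by
  have h := one_le_floor (lurothL_iterate_mem hx n)
  have : 1 ≤ (⌊1 / lurothL^[n] x⌋).toNat := by omega
  simp only [lurothDigit, Nat.add_sub_cancel]
  omega

lemma digit_shift {x : ℝ} (m : ℕ) :
    lurothDigit (m+2) x = lurothDigit (m+1) (lurothL x) := by
  simp [lurothDigit, Function.iterate_succ_apply]

lemma x_eq_psi {x : ℝ} (hx : x ∈ Set.Ioc (0:ℝ) 1) :
    x = (lurothL x + (⌊1/x⌋ : ℝ)) / ((⌊1/x⌋ : ℝ) * ((⌊1/x⌋ : ℝ) + 1)) := by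
  have hk1 : (1:ℝ) ≤ (⌊1/x⌋ : ℝ) := by exact_mod_cast one_le_floor hx
  rw [lurothL, if_neg (ne_of_gt hx.1)]
  field_simp
  ring

lemma two_le_Q {x : ℝ} (hx : x ∈ Set.Ioc (0:ℝ) 1) {n : ℕ} (hn : 1 ≤ n) :
    2 ≤ lurothQ (fun m => lurothDigit m x) n := by
  obtain ⟨m, rfl⟩ := Nat.exists_eq_add_of_le hn
  have h1 : 1 ≤ ∏ j ∈ Finset.Ico 1 (1+m), (lurothDigit j x) * (lurothDigit j x - 1) := by
    apply Finset.one_le_prod'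
    intro j hj
    rw [Finset.mem_Ico] at hj
    obtain ⟨i, rfl⟩ := Nat.exists_eq_add_of_le hj.1
    have h2 : 2 ≤ lurothDigit (1+i) x := by
      have := two_le_digit hx i; rwa [Nat.add_comm]
    calc 1 = 1 * 1 := rfl
    _ ≤ lurothDigit (1+i) x * (lurothDigit (1+i) x - 1) :=
      Nat.mul_le_mul (by omega) (by omega)
  have h2 : 2 ≤ lurothDigit (1+m) x := by
    have := two_le_digit hx m; rwa [Nat.add_comm]
  calc 2 = 1 * 2 := by ring
  _ ≤ (∏ j ∈ Finset.Ico 1 (1+m), (lurothDigit j x) * (lurothDigit j x - 1)) *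
      lurothDigit (1+m) x := Nat.mul_le_mul h1 h2
  _ = _ := rfl

lemma Q_shift {x : ℝ} {m : ℕ} (hm : 1 ≤ m) :
    lurothQ (fun j => lurothDigit j x) (m+1)
      = (lurothDigit 1 x) * (lurothDigit 1 x - 1)
        * lurothQ (fun j => lurothDigit j (lurothL x)) m := by
  obtain ⟨m', rfl⟩ := Nat.exists_eq_add_of_le hm
  simp only [lurothQ]
  have hsplit : ∏ j ∈ Finset.Ico 1 (1 + m' + 1), (lurothDigit j x) * (lurothDigit j x - 1)
      = (lurothDigit 1 x) * (lurothDigit 1 x - 1) *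
        ∏ j ∈ Finset.Ico 2 (1 + m' + 1), (lurothDigit j x) * (lurothDigit j x - 1) :=
    Finset.prod_eq_prod_Ico_succ_bot (by omega) _
  have hreindex : ∏ j ∈ Finset.Ico 2 (1 + m' + 1), (lurothDigit j x) * (lurothDigit j x - 1)
      = ∏ j ∈ Finset.Ico 1 (1 + m'), (lurothDigit (j+1) x) * (lurothDigit (j+1) x - 1) := by
    rw [Finset.prod_Ico_add' (fun j => (lurothDigit j x) * (lurothDigit j x - 1)) 1 (1+m') 1]
  have hcongr : ∏ j ∈ Finset.Ico 1 (1 + m'), (lurothDigit (j+1) x) * (lurothDigit (j+1) x - 1)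
      = ∏ j ∈ Finset.Ico 1 (1 + m'),
          (lurothDigit j (lurothL x)) * (lurothDigit j (lurothL x) - 1) := by
    apply Finset.prod_congr rfl
    intro j hj
    rw [Finset.mem_Ico] at hj
    obtain ⟨i, rfl⟩ := Nat.exists_eq_add_of_le hj.1
    rw [show 1 + i + 1 = i + 2 by omega, digit_shift, show i + 1 = 1 + i by omega]
  have hlast : lurothDigit (1 + m' + 1) x = lurothDigit (1 + m') (lurothL x) := by
    rw [show 1 + m' + 1 = m' + 2 by omega, digit_shift, show m' + 1 = 1 + m' by omega]
  rw [hsplit, hreindex, hcongr, hlast]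
  ring

end LurothAux
open Set Filter MeasureTheory
open scoped ENNReal NNReal Topology

namespace LurothAux

noncomputable def hcont (s : ℝ) (A : Set ℝ) : ℝ≥0∞ :=
  ⨅ (t : ℕ → Set ℝ) (_ : A ⊆ ⋃ n, t n), ∑' n, EMetric.diam (t n) ^ s

lemma hcont_le {s : ℝ} {A : Set ℝ} {t : ℕ → Set ℝ} (h : A ⊆ ⋃ n, t n) :
    hcont s A ≤ ∑' n, EMetric.diam (t n) ^ s :=
  iInf₂_le t h

lemma exists_cover_of_hcont_lt {s : ℝ} {A : Set ℝ} {c : ℝ≥0∞} (h : hcont s A < c) :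
    ∃ t : ℕ → Set ℝ, (A ⊆ ⋃ n, t n) ∧ ∑' n, EMetric.diam (t n) ^ s < c := by
  simpa [hcont, iInf_lt_iff] using h

lemma hcont_mono {s : ℝ} {A B : Set ℝ} (h : A ⊆ B) : hcont s A ≤ hcont s B := by
  refine le_iInf₂ fun t ht => hcont_le (h.trans ht)

lemma hcont_le_diam_rpow {s : ℝ} (hs : 0 < s) (A : Set ℝ) :
    hcont s A ≤ EMetric.diam A ^ s := by
  have hcov : A ⊆ ⋃ n : ℕ, (if n = 0 then A else ∅) := by
    intro x hx
    exact Set.mem_iUnion.2 ⟨0, by simpa using hx⟩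
  refine (hcont_le hcov).trans_eq ?_
  rw [tsum_eq_single 0]
  · simp
  · intro b hb
    simp [hb, EMetric.diam, ENNReal.zero_rpow_of_pos hs]

lemma hcont_empty {s : ℝ} (hs : 0 < s) : hcont s (∅ : Set ℝ) = 0 :=
  le_antisymm (by simpa [EMetric.diam, ENNReal.zero_rpow_of_pos hs] using hcont_le_diam_rpow hs ∅)
    (zero_le)

lemma hcont_iUnion_le {s : ℝ} (hs : 0 < s) (A : ℕ → Set ℝ) :
    hcont s (⋃ i, A i) ≤ ∑' i, hcont s (A i) := by
  refine ENNReal.le_of_forall_pos_le_add fun ε hε hfin => ?_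
  obtain ⟨δ, hδpos, hδsum⟩ := ENNReal.exists_pos_sum_of_countable
    (ENNReal.coe_ne_zero.2 hε.ne') ℕ
  have hex : ∀ i : ℕ, ∃ t : ℕ → Set ℝ,
      (A i ⊆ ⋃ n, t n) ∧ ∑' n, EMetric.diam (t n) ^ s < hcont s (A i) + δ i := by
    intro i
    have hlt : hcont s (A i) < hcont s (A i) + δ i := by
      refine ENNReal.lt_add_right ?_ (by exact_mod_cast (hδpos i).ne')
      exact ne_top_of_le_ne_top hfin.ne (ENNReal.le_tsum i)
    exact exists_cover_of_hcont_lt hlt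
  choose t hcov hsum using hex
  let e : ℕ ≃ ℕ × ℕ := (Denumerable.eqv (ℕ × ℕ)).symm
  have hcov' : (⋃ i, A i) ⊆ ⋃ n : ℕ, t (e n).1 (e n).2 := by
    intro x hx
    obtain ⟨i, hi⟩ := Set.mem_iUnion.1 hx
    obtain ⟨m, hm⟩ := Set.mem_iUnion.1 (hcov i hi)
    exact Set.mem_iUnion.2 ⟨e.symm (i, m), by simpa using hm⟩
  refine (hcont_le hcov').trans ?_
  have heq : ∑' n : ℕ, EMetric.diam (t (e n).1 (e n).2) ^ s
      = ∑' p : ℕ × ℕ, EMetric.diam (t p.1 p.2) ^ s :=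
    e.tsum_eq (fun p : ℕ × ℕ => EMetric.diam (t p.1 p.2) ^ s)
  have hprod : ∑' p : ℕ × ℕ, EMetric.diam (t p.1 p.2) ^ s
      = ∑' i, ∑' m, EMetric.diam (t i m) ^ s :=
    ENNReal.tsum_prod (f := fun i m => EMetric.diam (t i m) ^ s)
  rw [heq, hprod]
  calc ∑' i, ∑' m, EMetric.diam (t i m) ^ s
      ≤ ∑' i, (hcont s (A i) + δ i) := ENNReal.tsum_le_tsum fun i => (hsum i).le
    _ = (∑' i, hcont s (A i)) + ∑' i, (δ i : ℝ≥0∞) := ENNReal.tsum_add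
    _ ≤ (∑' i, hcont s (A i)) + ε := add_le_add_right hδsum.le _

lemma hcont_image_le {s : ℝ} (hs : 0 < s) {K : ℝ≥0} (hK : K ≠ 0) {f : ℝ → ℝ}
    (hf : LipschitzWith K f) {A : Set ℝ} {b : ℝ≥0∞} (hA : hcont s A ≤ b) :
    hcont s (f '' A) ≤ (K : ℝ≥0∞) ^ s * b := by
  have hKs_ne_top : (K : ℝ≥0∞) ^ s ≠ ⊤ := by
    refine ENNReal.rpow_ne_top_of_nonneg hs.le ENNReal.coe_ne_top
  have hKs_ne_zero : (K : ℝ≥0∞) ^ s ≠ 0 := by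
    simp [ENNReal.rpow_eq_zero_iff, ENNReal.coe_ne_top, hK]
  rcases eq_top_or_lt_top b with hb | hb
  · simp [hb, ENNReal.mul_top hKs_ne_zero]
  have key : ∀ c : ℝ≥0∞, hcont s A < c → hcont s (f '' A) ≤ (K : ℝ≥0∞) ^ s * c := by
    intro c hc
    obtain ⟨t, hcov, hsum⟩ := exists_cover_of_hcont_lt hc
    have hcov' : f '' A ⊆ ⋃ n, f '' (t n) := by
      rw [← Set.image_iUnion]
      exact Set.image_mono hcov
    refine (hcont_le hcov').trans ?_
    calc ∑' n, EMetric.diam (f '' t n) ^ s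
        ≤ ∑' n, ((K : ℝ≥0∞) * EMetric.diam (t n)) ^ s := by
          refine ENNReal.tsum_le_tsum fun n => ?_
          exact ENNReal.rpow_le_rpow (hf.ediam_image_le _) hs.le
      _ = ∑' n, (K : ℝ≥0∞) ^ s * EMetric.diam (t n) ^ s := by
          refine tsum_congr fun n => ?_
          rw [ENNReal.mul_rpow_of_nonneg _ _ hs.le]
      _ = (K : ℝ≥0∞) ^ s * ∑' n, EMetric.diam (t n) ^ s := ENNReal.tsum_mul_left
      _ ≤ (K : ℝ≥0∞) ^ s * c := mul_le_mul_right hsum.le _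
  refine ENNReal.le_of_forall_pos_le_add fun ε hε hfin => ?_
  have hε' : (0:ℝ≥0∞) < (ε : ℝ≥0∞) / (K : ℝ≥0∞) ^ s :=
    ENNReal.div_pos (by exact_mod_cast hε.ne') hKs_ne_top
  have hlt : hcont s A < b + (ε : ℝ≥0∞) / (K : ℝ≥0∞) ^ s :=
    lt_of_le_of_lt hA (ENNReal.lt_add_right hb.ne hε'.ne')
  refine (key _ hlt).trans ?_
  rw [mul_add]
  refine add_le_add_right ?_ _
  rw [ENNReal.mul_div_cancel hKs_ne_zero hKs_ne_top]

lemma hausdorffMeasure_zero_of_hcont_zero {s : ℝ} (hs : 0 < s) {A : Set ℝ}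
    (h : hcont s A = 0) : μH[s] A = 0 := by
  have hrpos : ∀ n : ℕ, (0:ℝ) < (1/2 : ℝ) ^ n := fun n => by positivity
  set r : ℕ → ℝ≥0∞ := fun n => ENNReal.ofReal ((1/2 : ℝ) ^ n) with hr_def
  have hrne : ∀ n, r n ≠ 0 := fun n => by
    simp [hr_def, ENNReal.ofReal_eq_zero, not_le, hrpos n]
  have hex : ∀ n : ℕ, ∃ t : ℕ → Set ℝ,
      (A ⊆ ⋃ i, t i) ∧ ∑' i, EMetric.diam (t i) ^ s < (r n) ^ s := by
    intro n
    refine exists_cover_of_hcont_lt ?_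
    rw [h]
    exact ENNReal.rpow_pos (pos_iff_ne_zero.2 (hrne n)) (by simp [hr_def]) |>.trans_le le_rfl
  choose t hcov hsum using hex
  have hr0 : Tendsto r atTop (nhds 0) := by
    rw [show (0:ℝ≥0∞) = ENNReal.ofReal 0 by simp]
    exact ENNReal.tendsto_ofReal
      (tendsto_pow_atTop_nhds_zero_of_lt_one (by norm_num) (by norm_num))
  have hdle : ∀ n i, EMetric.diam (t n i) ≤ r n := by
    intro n i
    have h1 : EMetric.diam (t n i) ^ s ≤ (r n) ^ s :=
      ((ENNReal.le_tsum i).trans_lt (hsum n)).le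
    exact (ENNReal.rpow_le_rpow_iff hs).1 h1
  have hmeas := MeasureTheory.Measure.hausdorffMeasure_le_liminf_tsum (ι := fun _ : ℕ => ℕ) s A
    (l := atTop) r hr0 t (Eventually.of_forall hdle) (Eventually.of_forall hcov)
  refine le_antisymm (hmeas.trans ?_) zero_le
  have h2 : Tendsto (fun n : ℕ => (r n) ^ s) atTop (nhds 0) := by
    have : ∀ n : ℕ, (r n) ^ s = ENNReal.ofReal (((1/2:ℝ) ^ s) ^ n) := by
      intro n
      have hrn : r n = ENNReal.ofReal ((1/2:ℝ) ^ n) := rfl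
      rw [hrn, ENNReal.ofReal_rpow_of_nonneg (hrpos n).le hs.le]
      congr 1
      rw [← Real.rpow_natCast (1/2 : ℝ) n, ← Real.rpow_mul (by norm_num),
        mul_comm, Real.rpow_mul (by norm_num), Real.rpow_natCast]
    simp only [this]
    rw [show (0:ℝ≥0∞) = ENNReal.ofReal 0 by simp]
    refine ENNReal.tendsto_ofReal (tendsto_pow_atTop_nhds_zero_of_lt_one ?_ ?_)
    · positivity
    · exact Real.rpow_lt_one (by norm_num) (by norm_num) hs
  have h3 : liminf (fun n : ℕ => ∑' i, EMetric.diam (t n i) ^ s) atTop ≤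
      liminf (fun n : ℕ => (r n) ^ s) atTop :=
    liminf_le_liminf (Eventually.of_forall fun n => (hsum n).le)
  rw [h2.liminf_eq] at h3
  exact h3

end LurothAux
namespace LurothAux

/-! ### Real analysis helpers -/

lemma rpow_neg_antitone {x y q : ℝ} (hx : 0 < x) (hxy : x ≤ y) (hq : 0 ≤ q) :
    y ^ (-q) ≤ x ^ (-q) := by
  rw [Real.rpow_neg hx.le, Real.rpow_neg (by linarith)]
  exact inv_anti₀ (Real.rpow_pos_of_pos hx q) (Real.rpow_le_rpow hx.le hxy hq)

lemma summable_rpow_neg {p : ℝ} (hp : 1 < p) : Summable (fun k : ℕ => (k:ℝ) ^ (-p)) := by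
  have h := Real.summable_nat_rpow_inv.2 hp
  refine h.congr fun n => ?_
  rw [Real.rpow_neg (Nat.cast_nonneg n)]

lemma tsum_ofReal_le_of_le {f : ℕ → ℝ≥0∞} {g : ℕ → ℝ} (hg : Summable g)
    (hg0 : ∀ k, 0 ≤ g k) (hfg : ∀ k, f k ≤ ENNReal.ofReal (g k)) :
    ∑' k, f k ≤ ENNReal.ofReal (∑' k, g k) := by
  calc ∑' k, f k ≤ ∑' k, ENNReal.ofReal (g k) := ENNReal.tsum_le_tsum hfg
  _ = ENNReal.ofReal (∑' k, g k) := (ENNReal.ofReal_tsum_of_nonneg hg0 hg).symm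

/-! ### The inverse branches -/

noncomputable def luPsi (k : ℕ) (y : ℝ) : ℝ := (y + k) / (k * (k+1))

lemma luPsi_lipschitz {k : ℕ} (hk : 1 ≤ k) :
    LipschitzWith (Real.toNNReal (((k:ℝ) * (k+1))⁻¹)) (luPsi k) := by
  have hk1 : (1:ℝ) ≤ (k:ℝ) := by exact_mod_cast hk
  have hpos : (0:ℝ) < (k:ℝ) * ((k:ℝ)+1) := by nlinarith
  apply LipschitzWith.of_dist_le_mul
  intro y z
  rw [Real.coe_toNNReal _ (by positivity)]
  rw [Real.dist_eq, Real.dist_eq, luPsi, luPsi]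
  have heq : (y + k) / ((k:ℝ) * (k+1)) - (z + k) / ((k:ℝ) * (k+1))
      = (y - z) / ((k:ℝ) * (k+1)) := by ring
  rw [heq, abs_div, abs_of_pos hpos, div_eq_inv_mul]

lemma toNat_floor_cast {x : ℝ} (hx : x ∈ Set.Ioc (0:ℝ) 1) :
    (((⌊1/x⌋).toNat : ℕ) : ℝ) = (⌊1/x⌋ : ℝ) := by
  exact_mod_cast Int.toNat_of_nonneg (by linarith [one_le_floor hx] : (0:ℤ) ≤ ⌊1/x⌋)

lemma one_le_toNat_floor {x : ℝ} (hx : x ∈ Set.Ioc (0:ℝ) 1) : 1 ≤ (⌊1/x⌋).toNat := by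
  have := one_le_floor hx; omega

lemma digit_one_eq_toNat {x : ℝ} : lurothDigit 1 x = (⌊1/x⌋).toNat + 1 := by
  simp [lurothDigit]

lemma x_eq_luPsi {x : ℝ} (hx : x ∈ Set.Ioc (0:ℝ) 1) :
    x = luPsi (⌊1/x⌋).toNat (lurothL x) := by
  show x = (lurothL x + (((⌊1/x⌋).toNat : ℕ):ℝ))
      / ((((⌊1/x⌋).toNat : ℕ):ℝ) * ((((⌊1/x⌋).toNat : ℕ):ℝ) + 1))
  rw [toNat_floor_cast hx]
  exact x_eq_psi hx

lemma piece_subset_image {A B : Set ℝ} (hA : A ⊆ Set.Ioc (0:ℝ) 1) {k : ℕ}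
    (h : ∀ x ∈ A, (⌊1/x⌋).toNat = k → lurothL x ∈ B) :
    A ∩ {x : ℝ | (⌊1/x⌋).toNat = k} ⊆ luPsi k '' B := by
  rintro x ⟨hxA, hxk⟩
  have hx := hA hxA
  refine ⟨lurothL x, h x hxA hxk, ?_⟩
  have : luPsi k (lurothL x) = luPsi (⌊1/x⌋).toNat (lurothL x) := by rw [hxk]
  rw [this]
  exact (x_eq_luPsi hx).symm

lemma hcont_le_tsum_pieces {s : ℝ} (hs : 0 < s) {A : Set ℝ} (F : ℕ → ℝ≥0∞)
    (hF : ∀ k : ℕ, hcont s (A ∩ {x : ℝ | (⌊1/x⌋).toNat = k}) ≤ F k) :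
    hcont s A ≤ ∑' k, F k := by
  have hcov : A ⊆ ⋃ k : ℕ, (A ∩ {x : ℝ | (⌊1/x⌋).toNat = k}) := fun x hx =>
    Set.mem_iUnion.2 ⟨(⌊1/x⌋).toNat, hx, rfl⟩
  exact (hcont_mono hcov).trans ((hcont_iUnion_le hs _).trans (ENNReal.tsum_le_tsum hF))

lemma hcont_piece_zero {s : ℝ} (hs : 0 < s) {A : Set ℝ} (hA : A ⊆ Set.Ioc (0:ℝ) 1) :
    hcont s (A ∩ {x : ℝ | (⌊1/x⌋).toNat = 0}) = 0 := by
  have : A ∩ {x : ℝ | (⌊1/x⌋).toNat = 0} = ∅ := by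
    ext x
    simp only [Set.mem_inter_iff, Set.mem_setOf_eq, Set.mem_empty_iff_false, iff_false]
    rintro ⟨hxA, hxk⟩
    have := one_le_toNat_floor (hA hxA)
    omega
  rw [this, hcont_empty hs]

/-! ### The sets G and E_N -/

def Gset (γ c : ℝ) : Set ℝ :=
  {x : ℝ | x ∈ Set.Ioc (0:ℝ) 1 ∧ c ^ (γ/2) ≤ (lurothDigit 1 x : ℝ) ∧
    ∀ n : ℕ, 1 ≤ n →
      (c * (lurothQ (fun m => lurothDigit m x) n : ℝ)) ^ γ ≤ (lurothDigit (n+1) x : ℝ)}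

def ENset (γ : ℝ) (N : ℕ) : Set ℝ :=
  {x : ℝ | x ∈ Set.Ioc (0:ℝ) 1 ∧ ∀ n : ℕ, N ≤ n →
    ((lurothQ (fun m => lurothDigit m x) n : ℝ)) ^ γ ≤ (lurothDigit (n+1) x : ℝ)}

lemma Gset_subset_Ioc {γ c : ℝ} : Gset γ c ⊆ Set.Ioc (0:ℝ) 1 := fun _ hx => hx.1

lemma ENset_subset_Ioc {γ : ℝ} {N : ℕ} : ENset γ N ⊆ Set.Ioc (0:ℝ) 1 := fun _ hx => hx.1

lemma Q_one {x : ℝ} : lurothQ (fun m => lurothDigit m x) 1 = lurothDigit 1 x := by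
  simp [lurothQ]

lemma digit_one_of_toNat {x : ℝ} {k : ℕ} (hk : (⌊1/x⌋).toNat = k) :
    lurothDigit 1 x = k + 1 := by
  rw [digit_one_eq_toNat, hk]

/-- Shift lemma for G sets. -/
lemma Gset_shift {γ c : ℝ} (hγ : 0 < γ) (hc : 1 ≤ c) {x : ℝ} (hx : x ∈ Gset γ c)
    {k : ℕ} (hk : (⌊1/x⌋).toNat = k) :
    lurothL x ∈ Gset γ (c * ((k:ℝ) * ((k:ℝ)+1))) := by
  obtain ⟨hxI, hhead, htail⟩ := hx
  have hk1 : 1 ≤ k := hk ▸ one_le_toNat_floor hxI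
  have hk1R : (1:ℝ) ≤ (k:ℝ) := by exact_mod_cast hk1
  have hyI : lurothL x ∈ Set.Ioc (0:ℝ) 1 := lurothL_mem hxI
  have hd1 : lurothDigit 1 x = k + 1 := digit_one_of_toNat hk
  have hd2 : lurothDigit 1 (lurothL x) = lurothDigit 2 x := (digit_shift 0).symm
  have ht1 := htail 1 le_rfl
  rw [Q_one, hd1] at ht1
  -- ht1 : (c * ((k+1 : ℕ):ℝ)) ^ γ ≤ (lurothDigit 2 x : ℝ)
  refine ⟨hyI, ?_, ?_⟩
  · -- head condition
    rw [hd2]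
    refine le_trans ?_ ht1
    have hcast : (((k+1:ℕ)):ℝ) = (k:ℝ) + 1 := by push_cast; ring
    rw [hcast]
    have hc0 : (0:ℝ) < c := lt_of_lt_of_le one_pos hc
    have hk0 : (0:ℝ) < (k:ℝ) := lt_of_lt_of_le one_pos hk1R
    have hkk : (0:ℝ) < (k:ℝ) * ((k:ℝ)+1) := by nlinarith
    have hb1 : (0:ℝ) ≤ c * ((k:ℝ) * ((k:ℝ)+1)) := (mul_pos hc0 hkk).le
    have hb2 : c * ((k:ℝ) * ((k:ℝ)+1)) ≤ (c * ((k:ℝ)+1)) ^ (2:ℕ) := by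
      have h1 : c * ((k:ℝ) * ((k:ℝ)+1)) ≤ c * (((k:ℝ)+1) * ((k:ℝ)+1)) :=
        mul_le_mul_of_nonneg_left (by nlinarith) hc0.le
      have h2 : (0:ℝ) ≤ (c - 1) * c * (((k:ℝ)+1) * ((k:ℝ)+1)) := by
        apply mul_nonneg (mul_nonneg (by linarith) hc0.le) (by nlinarith)
      nlinarith [h1, h2]
    calc (c * ((k:ℝ) * ((k:ℝ)+1))) ^ (γ/2)
        ≤ ((c * ((k:ℝ)+1)) ^ (2:ℕ)) ^ (γ/2) :=
          Real.rpow_le_rpow hb1 hb2 (by linarith)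
      _ = (c * ((k:ℝ)+1)) ^ γ := by
          rw [← Real.rpow_natCast (c * ((k:ℝ)+1)) 2,
            ← Real.rpow_mul (by nlinarith : (0:ℝ) ≤ c * ((k:ℝ)+1))]
          congr 1
          push_cast
          ring
  · -- tail condition
    intro n hn
    have hdsh : lurothDigit (n+1) (lurothL x) = lurothDigit (n+2) x := (digit_shift n).symm
    rw [hdsh]
    have ht := htail (n+1) (by omega)
    have hQ : lurothQ (fun j => lurothDigit j x) (n+1)
        = (lurothDigit 1 x) * (lurothDigit 1 x - 1)
          * lurothQ (fun j => lurothDigit j (lurothL x)) n := Q_shift hn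
    rw [hQ, hd1] at ht
    refine le_trans (le_of_eq ?_) ht
    congr 1
    push_cast [show k + 1 - 1 = k from rfl]
    ring

/-- Shift lemma for E_N sets. -/
lemma ENset_shift {γ : ℝ} (hγ : 0 ≤ γ) {N : ℕ} {x : ℝ} (hx : x ∈ ENset γ (N+2))
    {k : ℕ} (hk : (⌊1/x⌋).toNat = k) :
    lurothL x ∈ ENset γ (N+1) := by
  obtain ⟨hxI, htail⟩ := hx
  have hk1 : 1 ≤ k := hk ▸ one_le_toNat_floor hxI
  have hd1 : lurothDigit 1 x = k + 1 := digit_one_of_toNat hk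
  refine ⟨lurothL_mem hxI, ?_⟩
  intro n hn
  have hdsh : lurothDigit (n+1) (lurothL x) = lurothDigit (n+2) x := (digit_shift n).symm
  rw [hdsh]
  have ht := htail (n+1) (by omega)
  have hQ : lurothQ (fun j => lurothDigit j x) (n+1)
      = (lurothDigit 1 x) * (lurothDigit 1 x - 1)
        * lurothQ (fun j => lurothDigit j (lurothL x)) n := Q_shift (by omega)
  rw [hQ, hd1] at ht
  have hknat : (k+1) * (k+1-1) * lurothQ (fun j => lurothDigit j (lurothL x)) n
      = (k+1) * k * lurothQ (fun j => lurothDigit j (lurothL x)) n := by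
    rw [Nat.add_sub_cancel]
  rw [hknat] at ht
  refine le_trans ?_ ht
  apply Real.rpow_le_rpow (Nat.cast_nonneg _) _ hγ
  have h1R : (1:ℝ) ≤ ((k:ℝ)+1) * (k:ℝ) := by
    have : (1:ℝ) ≤ (k:ℝ) := by exact_mod_cast hk1
    nlinarith
  have hQ0 : (0:ℝ) ≤ (lurothQ (fun j => lurothDigit j (lurothL x)) n : ℝ) := Nat.cast_nonneg _
  have hmul := mul_le_mul_of_nonneg_right h1R hQ0
  push_cast
  nlinarith [hmul]

lemma ENset_one_subset_Gset {γ : ℝ} (hγ : 0 < γ) : ENset γ 1 ⊆ Gset γ 1 := by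
  rintro x ⟨hxI, htail⟩
  refine ⟨hxI, ?_, ?_⟩
  · rw [Real.one_rpow]
    have h2 : 2 ≤ lurothDigit 1 x := two_le_digit hxI 0
    calc (1:ℝ) ≤ 2 := by norm_num
    _ ≤ _ := by exact_mod_cast h2
  · intro n hn
    rw [one_mul]
    exact htail n hn

end LurothAux
namespace LurothAux

lemma digit_ge_imp_le {y : ℝ} (hy : y ∈ Set.Ioc (0:ℝ) 1) {t : ℝ} (ht : 0 < t)
    (hd : t ≤ (lurothDigit 1 y : ℝ)) : y ≤ 2 * t⁻¹ := by
  rcases le_or_gt t 2 with h | h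
  · have h1 : (1:ℝ) ≤ 2 * t⁻¹ := by
      rw [mul_comm, ← div_eq_inv_mul, le_div_iff₀ ht]
      linarith
    linarith [hy.2]
  · have hdc : (lurothDigit 1 y : ℝ) = (⌊1/y⌋ : ℝ) + 1 := digit_one_cast hy
    have hfloor : t - 1 ≤ (⌊1/y⌋ : ℝ) := by linarith
    have hinv : t - 1 ≤ 1/y := le_trans hfloor floor_le_inv
    have hy0 := hy.1
    have hty : (t-1) * y ≤ 1 := (le_div_iff₀ hy0).1 hinv
    have h2 : y * t ≤ 2 := by nlinarith [hy.2]
    rw [mul_comm, ← div_eq_inv_mul, le_div_iff₀ ht]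
    linarith

lemma Gset_piece_shrink {γ c : ℝ} (hγ : 0 < γ) (hc : 1 ≤ c) {k : ℕ} :
    Gset γ c ∩ {x : ℝ | (⌊1/x⌋).toNat = k}
      ⊆ luPsi k '' (Set.Ioc 0 (min 1 (2 * ((c * ((k:ℝ)+1)) ^ γ)⁻¹))) := by
  apply piece_subset_image Gset_subset_Ioc
  intro x hx hxk
  obtain ⟨hxI, hhead, htail⟩ := hx
  have hyI := lurothL_mem hxI
  have hc0 : (0:ℝ) < c := lt_of_lt_of_le one_pos hc
  have ht0 : (0:ℝ) < (c * ((k:ℝ)+1)) ^ γ :=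
    Real.rpow_pos_of_pos (by positivity) _
  refine ⟨hyI.1, le_min hyI.2 ?_⟩
  have hd2 : lurothDigit 1 (lurothL x) = lurothDigit 2 x := (digit_shift 0).symm
  have ht1 := htail 1 le_rfl
  rw [Q_one, digit_one_of_toNat hxk] at ht1
  have hcast : (((k+1:ℕ)):ℝ) = (k:ℝ) + 1 := by push_cast; ring
  rw [hcast] at ht1
  exact digit_ge_imp_le hyI ht0 (by rw [hd2]; exact ht1)

lemma hcont_psi_Ioc {s : ℝ} (hs : 0 < s) {k : ℕ} (hk1 : 1 ≤ k) {r : ℝ} (hr : 0 ≤ r) :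
    hcont s (luPsi k '' Set.Ioc 0 r)
      ≤ ENNReal.ofReal (((((k:ℝ)) * ((k:ℝ)+1))⁻¹ * r) ^ s) := by
  have hk1R : (1:ℝ) ≤ (k:ℝ) := by exact_mod_cast hk1
  have hu0 : (0:ℝ) ≤ ((k:ℝ) * ((k:ℝ)+1))⁻¹ := by positivity
  refine (hcont_le_diam_rpow hs _).trans ?_
  have h1 : EMetric.diam (luPsi k '' Set.Ioc 0 r)
      ≤ ((Real.toNNReal (((k:ℝ) * ((k:ℝ)+1))⁻¹) : ℝ≥0) : ℝ≥0∞)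
        * EMetric.diam (Set.Ioc (0:ℝ) r) := (luPsi_lipschitz hk1).ediam_image_le _
  have h2 : ((Real.toNNReal (((k:ℝ) * ((k:ℝ)+1))⁻¹) : ℝ≥0) : ℝ≥0∞)
      = ENNReal.ofReal (((k:ℝ) * ((k:ℝ)+1))⁻¹) := rfl
  rw [show EMetric.diam (Set.Ioc (0:ℝ) r) = Metric.ediam (Set.Ioc (0:ℝ) r) from rfl,
    Real.ediam_Ioc, sub_zero, h2, ← ENNReal.ofReal_mul hu0] at h1
  calc EMetric.diam (luPsi k '' Set.Ioc 0 r) ^ s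
      ≤ (ENNReal.ofReal (((k:ℝ) * ((k:ℝ)+1))⁻¹ * r)) ^ s :=
        ENNReal.rpow_le_rpow h1 hs.le
    _ = ENNReal.ofReal ((((k:ℝ) * ((k:ℝ)+1))⁻¹ * r) ^ s) :=
        ENNReal.ofReal_rpow_of_nonneg (by positivity) hs.le

lemma key_real_bound {s γ c : ℝ} (hs : 0 < s) (hγ : 0 < γ) (hc : 1 ≤ c) {k : ℕ}
    (hk : 1 ≤ k) :
    ((((k:ℝ)) * ((k:ℝ)+1))⁻¹ * min 1 (2 * ((c * ((k:ℝ)+1)) ^ γ)⁻¹)) ^ s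
      ≤ 2 ^ s * c ^ (-(γ*s)) * (k:ℝ) ^ (-((2+γ)*s)) := by
  have hk1R : (1:ℝ) ≤ (k:ℝ) := by exact_mod_cast hk
  have hk0 : (0:ℝ) < (k:ℝ) := by linarith
  have hc0 : (0:ℝ) < c := by linarith
  have hu0 : (0:ℝ) ≤ ((k:ℝ) * ((k:ℝ)+1))⁻¹ := by positivity
  have ht0 : (0:ℝ) < (c * ((k:ℝ)+1)) ^ γ := Real.rpow_pos_of_pos (by positivity) _
  have hmin0 : (0:ℝ) ≤ min 1 (2 * ((c * ((k:ℝ)+1)) ^ γ)⁻¹) := le_min (by norm_num) (by positivity)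
  -- step 1 : base ≤ 2 * c^(-γ) * k^(-(2+γ))
  have hbase : (((k:ℝ)) * ((k:ℝ)+1))⁻¹ * min 1 (2 * ((c * ((k:ℝ)+1)) ^ γ)⁻¹)
      ≤ 2 * c ^ (-γ) * (k:ℝ) ^ (-(2+γ)) := by
    have e1 : ((c * ((k:ℝ)+1)) ^ γ)⁻¹ = (c * ((k:ℝ)+1)) ^ (-γ) :=
      (Real.rpow_neg (by positivity) γ).symm
    have e2 : (c * ((k:ℝ)+1)) ^ (-γ) = c ^ (-γ) * ((k:ℝ)+1) ^ (-γ) :=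
      Real.mul_rpow hc0.le (by positivity)
    have e3 : ((k:ℝ)+1) ^ (-γ) ≤ (k:ℝ) ^ (-γ) :=
      rpow_neg_antitone hk0 (by linarith) hγ.le
    have e4 : (((k:ℝ)) * ((k:ℝ)+1))⁻¹ ≤ (k:ℝ) ^ (-(2:ℝ)) := by
      rw [Real.rpow_neg hk0.le, show ((2:ℝ)) = ((2:ℕ):ℝ) by norm_num,
        Real.rpow_natCast]
      apply inv_anti₀ (by positivity)
      nlinarith
    have e5 : (k:ℝ) ^ (-(2:ℝ)) * (k:ℝ) ^ (-γ) = (k:ℝ) ^ (-(2+γ)) := by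
      rw [← Real.rpow_add hk0]; ring_nf
    calc (((k:ℝ)) * ((k:ℝ)+1))⁻¹ * min 1 (2 * ((c * ((k:ℝ)+1)) ^ γ)⁻¹)
        ≤ (k:ℝ) ^ (-(2:ℝ)) * (2 * ((c * ((k:ℝ)+1)) ^ γ)⁻¹) := by
          apply mul_le_mul e4 (min_le_right _ _) hmin0 (by positivity)
      _ = 2 * ((k:ℝ) ^ (-(2:ℝ)) * (c ^ (-γ) * ((k:ℝ)+1) ^ (-γ))) := by
          rw [e1, e2]; ring
      _ ≤ 2 * ((k:ℝ) ^ (-(2:ℝ)) * (c ^ (-γ) * (k:ℝ) ^ (-γ))) := by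
          have hcneg : (0:ℝ) ≤ c ^ (-γ) := (Real.rpow_pos_of_pos hc0 _).le
          have hkneg : (0:ℝ) ≤ (k:ℝ) ^ (-(2:ℝ)) := (Real.rpow_pos_of_pos hk0 _).le
          apply mul_le_mul_of_nonneg_left _ (by norm_num)
          apply mul_le_mul_of_nonneg_left _ hkneg
          exact mul_le_mul_of_nonneg_left e3 hcneg
      _ = 2 * c ^ (-γ) * ((k:ℝ) ^ (-(2:ℝ)) * (k:ℝ) ^ (-γ)) := by ring
      _ = 2 * c ^ (-γ) * (k:ℝ) ^ (-(2+γ)) := by rw [e5]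
  -- step 2 : raise to power s
  have h2 : (((((k:ℝ)) * ((k:ℝ)+1))⁻¹ * min 1 (2 * ((c * ((k:ℝ)+1)) ^ γ)⁻¹))) ^ s
      ≤ (2 * c ^ (-γ) * (k:ℝ) ^ (-(2+γ))) ^ s :=
    Real.rpow_le_rpow (by positivity) hbase hs.le
  refine h2.trans (le_of_eq ?_)
  have hcneg : (0:ℝ) ≤ c ^ (-γ) := (Real.rpow_pos_of_pos hc0 _).le
  have hkneg : (0:ℝ) ≤ (k:ℝ) ^ (-(2+γ)) := (Real.rpow_pos_of_pos hk0 _).le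
  rw [Real.mul_rpow (by positivity) hkneg, Real.mul_rpow (by norm_num) hcneg,
    ← Real.rpow_mul hc0.le, ← Real.rpow_mul hk0.le]
  ring_nf

/-- The base bound : hcont s (G c) ≤ 2^s (∑ k^{-(2+γ)s}) c^{-γ s}. -/
lemma Gset_base_bound {s γ c : ℝ} (hs : 0 < s) (hγ : 0 < γ)
    (hp : 1 < (2+γ)*s) (hc : 1 ≤ c) :
    hcont s (Gset γ c)
      ≤ ENNReal.ofReal ((2:ℝ)^s * (∑' k:ℕ, (k:ℝ)^(-((2+γ)*s))) * c^(-(γ*s))) := by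
  have hc0 : (0:ℝ) < c := by linarith
  have hsummable : Summable (fun k:ℕ => (k:ℝ)^(-((2+γ)*s))) := summable_rpow_neg hp
  set g : ℕ → ℝ := fun k => (2:ℝ)^s * c^(-(γ*s)) * (k:ℝ)^(-((2+γ)*s)) with hg
  have hg0 : ∀ k, 0 ≤ g k := by
    intro k
    apply mul_nonneg (mul_nonneg (Real.rpow_nonneg (by norm_num) _)
      (Real.rpow_nonneg hc0.le _)) (Real.rpow_nonneg (Nat.cast_nonneg _) _)
  have hgsummable : Summable g := by
    apply Summable.mul_left _ hsummable
  have hper : ∀ k : ℕ, hcont s (Gset γ c ∩ {x : ℝ | (⌊1/x⌋).toNat = k})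
      ≤ ENNReal.ofReal (g k) := by
    intro k
    rcases Nat.eq_zero_or_pos k with rfl | hk
    · rw [hcont_piece_zero hs Gset_subset_Ioc]
      exact zero_le
    · refine (hcont_mono (Gset_piece_shrink hγ hc)).trans ?_
      refine (hcont_psi_Ioc hs hk (le_min (by norm_num) (by positivity))).trans ?_
      exact ENNReal.ofReal_le_ofReal (key_real_bound hs hγ hc hk)
  calc hcont s (Gset γ c) ≤ ∑' k, ENNReal.ofReal (g k) := hcont_le_tsum_pieces hs _ hper
    _ = ENNReal.ofReal (∑' k, g k) := (ENNReal.ofReal_tsum_of_nonneg hg0 hgsummable).symm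
    _ = ENNReal.ofReal ((2:ℝ)^s * (∑' k:ℕ, (k:ℝ)^(-((2+γ)*s))) * c^(-(γ*s))) := by
        rw [hg, tsum_mul_left]
        congr 1
        ring

end LurothAux
namespace LurothAux

lemma luPsi_K_ne_zero {k : ℕ} (hk : 1 ≤ k) :
    Real.toNNReal (((k:ℝ) * ((k:ℝ)+1))⁻¹) ≠ 0 := by
  have hk1R : (1:ℝ) ≤ (k:ℝ) := by exact_mod_cast hk
  rw [Ne, Real.toNNReal_eq_zero, not_le]
  have : (0:ℝ) < (k:ℝ) * ((k:ℝ)+1) := by nlinarith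
  positivity

lemma Gset_head_empty {γ c : ℝ} {k : ℕ} (h : ((k:ℝ)+1) < c^(γ/2)) :
    Gset γ c ∩ {x : ℝ | (⌊1/x⌋).toNat = k} = ∅ := by
  ext x
  simp only [Set.mem_inter_iff, Set.mem_setOf_eq, Set.mem_empty_iff_false, iff_false, not_and]
  rintro ⟨hxI, hhead, _⟩ hxk
  rw [digit_one_of_toNat hxk] at hhead
  push_cast at hhead
  linarith

lemma key_real_bound2 {s γ c B : ℝ} (hs : 0 < s) (hγ : 0 < γ) (hc : 1 ≤ c)
    (hB : 0 ≤ B) {k : ℕ} (hk : 1 ≤ k) :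
    ((((k:ℝ) * ((k:ℝ)+1))⁻¹) ^ s) * (B * (c * ((k:ℝ) * ((k:ℝ)+1))) ^ (-(γ*s)))
      ≤ B * c ^ (-(γ*s)) * (k:ℝ) ^ (-(2*(1+γ)*s)) := by
  have hk1R : (1:ℝ) ≤ (k:ℝ) := by exact_mod_cast hk
  have hk0 : (0:ℝ) < (k:ℝ) := by linarith
  have hc0 : (0:ℝ) < c := by linarith
  have hw0 : (0:ℝ) < (k:ℝ) * ((k:ℝ)+1) := by nlinarith
  have e1 : (((k:ℝ) * ((k:ℝ)+1))⁻¹) ^ s = ((k:ℝ) * ((k:ℝ)+1)) ^ (-s) := by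
    rw [Real.inv_rpow hw0.le, ← Real.rpow_neg hw0.le]
  have e2 : (c * ((k:ℝ) * ((k:ℝ)+1))) ^ (-(γ*s))
      = c ^ (-(γ*s)) * ((k:ℝ) * ((k:ℝ)+1)) ^ (-(γ*s)) :=
    Real.mul_rpow hc0.le hw0.le
  have e3 : ((k:ℝ) * ((k:ℝ)+1)) ^ (-s) * ((k:ℝ) * ((k:ℝ)+1)) ^ (-(γ*s))
      = ((k:ℝ) * ((k:ℝ)+1)) ^ (-(1+γ)*s) := by
    rw [← Real.rpow_add hw0]; ring_nf
  have e4 : ((k:ℝ) * ((k:ℝ)+1)) ^ (-(1+γ)*s) ≤ ((k:ℝ)^(2:ℝ)) ^ (-(1+γ)*s) := by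
    have hneg : -(1+γ)*s = -((1+γ)*s) := by ring
    rw [hneg]
    apply rpow_neg_antitone (by positivity) _ (by nlinarith)
    rw [show ((2:ℝ)) = ((2:ℕ):ℝ) by norm_num, Real.rpow_natCast]
    nlinarith
  have e5 : ((k:ℝ)^(2:ℝ)) ^ (-(1+γ)*s) = (k:ℝ) ^ (-(2*(1+γ)*s)) := by
    rw [← Real.rpow_mul hk0.le]
    ring_nf
  calc ((((k:ℝ) * ((k:ℝ)+1))⁻¹) ^ s) * (B * (c * ((k:ℝ) * ((k:ℝ)+1))) ^ (-(γ*s)))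
      = B * c ^ (-(γ*s)) * (((k:ℝ) * ((k:ℝ)+1)) ^ (-s)
          * ((k:ℝ) * ((k:ℝ)+1)) ^ (-(γ*s))) := by rw [e1, e2]; ring
    _ = B * c ^ (-(γ*s)) * ((k:ℝ) * ((k:ℝ)+1)) ^ (-(1+γ)*s) := by rw [e3]
    _ ≤ B * c ^ (-(γ*s)) * ((k:ℝ)^(2:ℝ)) ^ (-(1+γ)*s) := by
        apply mul_le_mul_of_nonneg_left e4
        exact mul_nonneg hB (Real.rpow_pos_of_pos hc0 _).le
    _ = B * c ^ (-(γ*s)) * (k:ℝ) ^ (-(2*(1+γ)*s)) := by rw [e5]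

lemma Gset_step {s γ : ℝ} (hs : 0 < s) (hγ : 0 < γ) {c B : ℝ} (hB : 0 ≤ B) (hc : 1 ≤ c)
    (hsmall : ∑' k:ℕ, (if (1 ≤ k ∧ c^(γ/2) ≤ (k:ℝ)+1) then (k:ℝ)^(-(2*(1+γ)*s)) else 0)
      ≤ 1/2)
    (hsummable : Summable (fun k:ℕ => (k:ℝ)^(-(2*(1+γ)*s))))
    (hφ : ∀ k:ℕ, 1 ≤ k → hcont s (Gset γ (c * ((k:ℝ) * ((k:ℝ)+1))))
        ≤ ENNReal.ofReal (B * (c * ((k:ℝ) * ((k:ℝ)+1))) ^ (-(γ*s)))) :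
    hcont s (Gset γ c) ≤ ENNReal.ofReal (B/2 * c ^ (-(γ*s))) := by
  have hc0 : (0:ℝ) < c := by linarith
  set gk : ℕ → ℝ := fun k =>
    if (1 ≤ k ∧ c^(γ/2) ≤ (k:ℝ)+1) then (k:ℝ)^(-(2*(1+γ)*s)) else 0 with hgk
  have hgk0 : ∀ k, 0 ≤ gk k := by
    intro k
    simp only [hgk]
    split_ifs
    · exact Real.rpow_nonneg (Nat.cast_nonneg _) _
    · exact le_rfl
  have hgksummable : Summable gk := by
    apply Summable.of_nonneg_of_le hgk0 _ hsummable
    intro k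
    simp only [hgk]
    split_ifs
    · exact le_rfl
    · exact Real.rpow_nonneg (Nat.cast_nonneg _) _
  have hper : ∀ k : ℕ, hcont s (Gset γ c ∩ {x : ℝ | (⌊1/x⌋).toNat = k})
      ≤ ENNReal.ofReal (B * c ^ (-(γ*s)) * gk k) := by
    intro k
    by_cases hgood : 1 ≤ k ∧ c^(γ/2) ≤ (k:ℝ)+1
    · have hk := hgood.1
      have hsub : Gset γ c ∩ {x : ℝ | (⌊1/x⌋).toNat = k}
          ⊆ luPsi k '' Gset γ (c * ((k:ℝ) * ((k:ℝ)+1))) :=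
        piece_subset_image Gset_subset_Ioc (fun x hx hxk => Gset_shift hγ hc hx hxk)
      have himg := hcont_image_le hs (luPsi_K_ne_zero hk) (luPsi_lipschitz hk) (hφ k hk)
      refine ((hcont_mono hsub).trans himg).trans ?_
      have hKs : ((Real.toNNReal (((k:ℝ) * ((k:ℝ)+1))⁻¹) : ℝ≥0) : ℝ≥0∞) ^ s
          = ENNReal.ofReal ((((k:ℝ) * ((k:ℝ)+1))⁻¹) ^ s) := by
        have : ((Real.toNNReal (((k:ℝ) * ((k:ℝ)+1))⁻¹) : ℝ≥0) : ℝ≥0∞)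
            = ENNReal.ofReal (((k:ℝ) * ((k:ℝ)+1))⁻¹) := rfl
        rw [this, ENNReal.ofReal_rpow_of_nonneg (by positivity) hs.le]
      rw [hKs, ← ENNReal.ofReal_mul (by positivity)]
      apply ENNReal.ofReal_le_ofReal
      have := key_real_bound2 hs hγ hc hB (k := k) hk
      simp only [hgk]
      rw [if_pos hgood]
      exact this
    · simp only [hgk]
      rw [if_neg hgood, mul_zero, ENNReal.ofReal_zero]
      rw [not_and_or] at hgood
      rcases hgood with hk | hhead
      · have hk0 : k = 0 := by omega
        subst hk0
        rw [hcont_piece_zero hs Gset_subset_Ioc]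
      · rw [not_le] at hhead
        rw [Gset_head_empty hhead, hcont_empty hs]
  calc hcont s (Gset γ c)
      ≤ ∑' k, ENNReal.ofReal (B * c ^ (-(γ*s)) * gk k) := hcont_le_tsum_pieces hs _ hper
    _ = ENNReal.ofReal (∑' k, B * c ^ (-(γ*s)) * gk k) := by
        refine (ENNReal.ofReal_tsum_of_nonneg (fun k => ?_) (hgksummable.mul_left _)).symm
        exact mul_nonneg (mul_nonneg hB (Real.rpow_pos_of_pos hc0 _).le) (hgk0 k)
    _ ≤ ENNReal.ofReal (B/2 * c ^ (-(γ*s))) := by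
        apply ENNReal.ofReal_le_ofReal
        rw [tsum_mul_left]
        have h1 : B * c ^ (-(γ*s)) * (∑' k, gk k) ≤ B * c ^ (-(γ*s)) * (1/2) :=
          mul_le_mul_of_nonneg_left hsmall
            (mul_nonneg hB (Real.rpow_pos_of_pos hc0 _).le)
        linarith

lemma exists_C0 {γ p : ℝ} (hγ : 0 < γ) (hp : 1 < p) :
    ∃ C₀ : ℝ, 1 ≤ C₀ ∧ ∀ c : ℝ, C₀ ≤ c →
      ∑' k:ℕ, (if (1 ≤ k ∧ c^(γ/2) ≤ (k:ℝ)+1) then (k:ℝ)^(-p) else 0) ≤ 1/2 := by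
  set q : ℝ := (1+p)/2 with hq
  have hq1 : 1 < q := by rw [hq]; linarith
  set Z : ℝ := ∑' k:ℕ, (k:ℝ)^(-q) with hZ
  have hZsum : Summable (fun k:ℕ => (k:ℝ)^(-q)) := summable_rpow_neg hq1
  have hZ0 : 0 ≤ Z := tsum_nonneg (fun k => Real.rpow_nonneg (Nat.cast_nonneg _) _)
  set X : ℝ := (2*(Z+1)) ^ (2/(p-1)) with hX
  have hX0 : (0:ℝ) < X := Real.rpow_pos_of_pos (by linarith) _
  refine ⟨(X+1) ^ (2/γ), ?_, ?_⟩
  · calc (1:ℝ) = (X+1) ^ (0:ℝ) := (Real.rpow_zero _).symm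
    _ ≤ (X+1) ^ (2/γ) :=
      Real.rpow_le_rpow_of_exponent_le (by linarith) (by positivity)
  · intro c hc
    have hcγ : X + 1 ≤ c^(γ/2) := by
      have h1 : ((X+1) ^ (2/γ)) ^ (γ/2) ≤ c ^ (γ/2) :=
        Real.rpow_le_rpow (Real.rpow_nonneg (by linarith) _) hc (by positivity)
      have h2 : ((X+1) ^ (2/γ)) ^ (γ/2) = X + 1 := by
        rw [← Real.rpow_mul (by linarith)]
        rw [show (2/γ) * (γ/2) = 1 by field_simp]
        exact Real.rpow_one _
      linarith
    have hterm : ∀ k:ℕ, (if (1 ≤ k ∧ c^(γ/2) ≤ (k:ℝ)+1) then (k:ℝ)^(-p) else 0)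
        ≤ (2*(Z+1))⁻¹ * (k:ℝ)^(-q) := by
      intro k
      split_ifs with h
      · obtain ⟨hk1, hkc⟩ := h
        have hk1R : (1:ℝ) ≤ (k:ℝ) := by exact_mod_cast hk1
        have hk0 : (0:ℝ) < (k:ℝ) := by linarith
        have hkX : X ≤ (k:ℝ) := by linarith
        have hsplit : (k:ℝ)^(-p) = (k:ℝ)^(-((p-1)/2)) * (k:ℝ)^(-q) := by
          rw [← Real.rpow_add hk0]
          congr 1
          rw [hq]; ring
        have hXbound : (k:ℝ)^(-((p-1)/2)) ≤ (2*(Z+1))⁻¹ := by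
          have h1 : (k:ℝ)^(-((p-1)/2)) ≤ X^(-((p-1)/2)) :=
            rpow_neg_antitone hX0 hkX (by linarith)
          have h2 : X^(-((p-1)/2)) = (2*(Z+1))⁻¹ := by
            rw [hX, ← Real.rpow_mul (by linarith : (0:ℝ) ≤ 2*(Z+1))]
            rw [show (2/(p-1)) * (-((p-1)/2)) = -1 by
              have h : p - 1 ≠ 0 := by linarith
              field_simp]
            rw [Real.rpow_neg_one]
          linarith [h1, h2.le]
        calc (k:ℝ)^(-p) = (k:ℝ)^(-((p-1)/2)) * (k:ℝ)^(-q) := hsplit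
        _ ≤ (2*(Z+1))⁻¹ * (k:ℝ)^(-q) :=
          mul_le_mul_of_nonneg_right hXbound (Real.rpow_nonneg hk0.le _)
      · positivity
    have hsum1 : Summable (fun k:ℕ =>
        (if (1 ≤ k ∧ c^(γ/2) ≤ (k:ℝ)+1) then (k:ℝ)^(-p) else 0)) := by
      apply Summable.of_nonneg_of_le _ hterm (hZsum.mul_left _)
      intro k
      split_ifs
      · exact Real.rpow_nonneg (Nat.cast_nonneg _) _
      · exact le_rfl
    calc ∑' k:ℕ, (if (1 ≤ k ∧ c^(γ/2) ≤ (k:ℝ)+1) then (k:ℝ)^(-p) else 0)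
        ≤ ∑' k:ℕ, (2*(Z+1))⁻¹ * (k:ℝ)^(-q) :=
          hsum1.tsum_le_tsum hterm (hZsum.mul_left _)
      _ = (2*(Z+1))⁻¹ * Z := by rw [tsum_mul_left]
      _ ≤ 1/2 := by
          rw [inv_mul_le_iff₀ (by linarith)]
          linarith

end LurothAux
namespace LurothAux

lemma Gset_zero {s γ : ℝ} (hs : 0 < s) (hγ : 0 < γ)
    (hp1 : 1 < (2+γ)*s) (hp2 : 1 < 2*(1+γ)*s) :
    ∀ c : ℝ, 1 ≤ c → hcont s (Gset γ c) = 0 := by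
  obtain ⟨C₀, hC₀1, hC₀⟩ := exists_C0 hγ hp2
  set M : ℝ := (2:ℝ)^s * (∑' k:ℕ, (k:ℝ)^(-((2+γ)*s))) with hM
  have hM0 : 0 ≤ M := by
    apply mul_nonneg (Real.rpow_nonneg (by norm_num) _)
    exact tsum_nonneg (fun k => Real.rpow_nonneg (Nat.cast_nonneg _) _)
  -- Step 1 : geometric decay in the region c ≥ C₀
  have step1 : ∀ j : ℕ, ∀ c : ℝ, C₀ ≤ c →
      hcont s (Gset γ c) ≤ ENNReal.ofReal ((1/2)^j * M * c^(-(γ*s))) := by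
    intro j
    induction j with
    | zero =>
      intro c hc
      rw [pow_zero, one_mul]
      exact Gset_base_bound hs hγ hp1 (le_trans hC₀1 hc)
    | succ j ih =>
      intro c hc
      have hc1 : 1 ≤ c := le_trans hC₀1 hc
      have hφ : ∀ k:ℕ, 1 ≤ k → hcont s (Gset γ (c * ((k:ℝ) * ((k:ℝ)+1))))
          ≤ ENNReal.ofReal (((1/2:ℝ)^j * M) * (c * ((k:ℝ) * ((k:ℝ)+1))) ^ (-(γ*s))) := by
        intro k hk
        have hkR : (1:ℝ) ≤ (k:ℝ) := by exact_mod_cast hk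
        refine (ih (c * ((k:ℝ) * ((k:ℝ)+1))) ?_).trans (le_of_eq (by rw [mul_assoc]))
        calc C₀ ≤ c := hc
        _ ≤ c * ((k:ℝ) * ((k:ℝ)+1)) :=
          le_mul_of_one_le_right (by linarith) (by nlinarith)
      have happ := Gset_step hs hγ (B := (1/2:ℝ)^j * M) (by positivity) hc1
        (hC₀ c hc) (summable_rpow_neg hp2) (by
          intro k hk
          have := hφ k hk
          refine this.trans (le_of_eq ?_)
          rw [mul_assoc])
      refine happ.trans (le_of_eq ?_)
      congr 1
      ring
  -- conclude zero on the region c ≥ C₀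
  have zero1 : ∀ c : ℝ, C₀ ≤ c → hcont s (Gset γ c) = 0 := by
    intro c hc
    refine le_antisymm ?_ zero_le
    have htend : Filter.Tendsto (fun j:ℕ => ENNReal.ofReal ((1/2)^j * M * c^(-(γ*s))))
        Filter.atTop (nhds 0) := by
      have h1 : Filter.Tendsto (fun j:ℕ => (1/2:ℝ)^j * (M * c^(-(γ*s))))
          Filter.atTop (nhds (0 * (M * c^(-(γ*s))))) :=
        (tendsto_pow_atTop_nhds_zero_of_lt_one (by norm_num) (by norm_num)).mul_const _
      rw [zero_mul] at h1
      have h2 := ENNReal.tendsto_ofReal (f := Filter.atTop) h1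
      rw [ENNReal.ofReal_zero] at h2
      refine h2.congr fun j => ?_
      rw [mul_assoc ((1/2:ℝ)^j) M]
    exact ge_of_tendsto' htend (fun j => step1 j c hc)
  -- Step 2 : propagate to all c ≥ 1
  have step2 : ∀ j : ℕ, ∀ c : ℝ, 1 ≤ c → C₀ ≤ 2^j * c → hcont s (Gset γ c) = 0 := by
    intro j
    induction j with
    | zero =>
      intro c hc h
      exact zero1 c (by simpa using h)
    | succ j ih =>
      intro c hc h
      refine le_antisymm ?_ zero_le
      have hper : ∀ k : ℕ, hcont s (Gset γ c ∩ {x : ℝ | (⌊1/x⌋).toNat = k})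
          ≤ (0:ℝ≥0∞) := by
        intro k
        rcases Nat.eq_zero_or_pos k with rfl | hk
        · rw [hcont_piece_zero hs Gset_subset_Ioc]
        · have hkR : (1:ℝ) ≤ (k:ℝ) := by exact_mod_cast hk
          have hsub : Gset γ c ∩ {x : ℝ | (⌊1/x⌋).toNat = k}
              ⊆ luPsi k '' Gset γ (c * ((k:ℝ) * ((k:ℝ)+1))) :=
            piece_subset_image Gset_subset_Ioc (fun x hx hxk => Gset_shift hγ hc hx hxk)
          have hzero : hcont s (Gset γ (c * ((k:ℝ) * ((k:ℝ)+1)))) = 0 := by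
            apply ih
            · calc (1:ℝ) ≤ c := hc
              _ ≤ c * ((k:ℝ) * ((k:ℝ)+1)) :=
                le_mul_of_one_le_right (by linarith) (by nlinarith)
            · calc C₀ ≤ 2^(j+1) * c := h
              _ = 2^j * (c * 2) := by ring
              _ ≤ 2^j * (c * ((k:ℝ) * ((k:ℝ)+1))) := by
                  apply mul_le_mul_of_nonneg_left _ (by positivity)
                  apply mul_le_mul_of_nonneg_left (by nlinarith) (by linarith)
          have himg := hcont_image_le hs (luPsi_K_ne_zero hk) (luPsi_lipschitz hk)
            (le_of_eq hzero)
          rw [mul_zero] at himg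
          exact (hcont_mono hsub).trans himg
      have := hcont_le_tsum_pieces hs (fun _ => 0) hper
      simpa using this
  intro c hc
  obtain ⟨j, hj⟩ := pow_unbounded_of_one_lt C₀ (by norm_num : (1:ℝ) < 2)
  exact step2 j c hc (le_trans hj.le (le_mul_of_one_le_right (by positivity) hc))

lemma ENset_zero {s γ : ℝ} (hs : 0 < s) (hγ : 0 < γ)
    (hp1 : 1 < (2+γ)*s) (hp2 : 1 < 2*(1+γ)*s) (N : ℕ) :
    hcont s (ENset γ (N+1)) = 0 := by
  induction N with
  | zero =>
    refine le_antisymm ?_ zero_le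
    refine (hcont_mono (ENset_one_subset_Gset hγ)).trans_eq
      (Gset_zero hs hγ hp1 hp2 1 le_rfl)
  | succ N ih =>
    refine le_antisymm ?_ zero_le
    have hper : ∀ k : ℕ, hcont s (ENset γ (N+2) ∩ {x : ℝ | (⌊1/x⌋).toNat = k})
        ≤ (0:ℝ≥0∞) := by
      intro k
      rcases Nat.eq_zero_or_pos k with rfl | hk
      · rw [hcont_piece_zero hs ENset_subset_Ioc]
      · have hsub : ENset γ (N+2) ∩ {x : ℝ | (⌊1/x⌋).toNat = k}
            ⊆ luPsi k '' ENset γ (N+1) :=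
          piece_subset_image ENset_subset_Ioc (fun x hx hxk => ENset_shift hγ.le hx hxk)
        have himg := hcont_image_le hs (luPsi_K_ne_zero hk) (luPsi_lipschitz hk)
          (le_of_eq ih)
        rw [mul_zero] at himg
        exact (hcont_mono hsub).trans himg
    have := hcont_le_tsum_pieces hs (fun _ => 0) hper
    simpa using this

end LurothAux

open LurothAux

/-- For β > 0, the set of x ∈ (0,1] with
lim (log a_{n+1})/(log Q_n) = β has Hausdorff dimension at most 1/(2 + β). -/
theorem luroth_growth_set_dimH_upper (β : ℝ) (hβ : 0 < β) :
    dimH {x ∈ Set.Ioc (0 : ℝ) 1 |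
        Filter.Tendsto (fun n : ℕ =>
            Real.log (lurothDigit (n + 1) x) /
              Real.log (lurothQ (fun m => lurothDigit m x) n))
          Filter.atTop (nhds β)}
      ≤ ENNReal.ofReal (1 / (2 + β)) := by
  set E := {x ∈ Set.Ioc (0 : ℝ) 1 |
        Filter.Tendsto (fun n : ℕ =>
            Real.log (lurothDigit (n + 1) x) /
              Real.log (lurothQ (fun m => lurothDigit m x) n))
          Filter.atTop (nhds β)} with hE
  have h2β : (0:ℝ) < 2 + β := by linarith
  have main : ∀ s : ℝ, 1/(2+β) < s → μH[s] E = 0 := by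
    intro s hslt
    have hs0 : (0:ℝ) < s := lt_trans (by positivity) hslt
    have hs2β : 1 < (2+β)*s := by
      rw [div_lt_iff₀ h2β] at hslt
      nlinarith
    set δ : ℝ := min (β/2) (((2+β)*s - 1)/(2*s)) with hδdef
    have hδ0 : 0 < δ :=
      lt_min (by linarith) (div_pos (by linarith) (by linarith))
    set γ : ℝ := β - δ with hγdef
    have hδβ2 : δ ≤ β/2 := min_le_left _ _
    have hγ0 : 0 < γ := by rw [hγdef]; linarith
    have hγβ : γ < β := by rw [hγdef]; linarith
    have hp1 : 1 < (2+γ)*s := by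
      have h2 : δ ≤ ((2+β)*s - 1)/(2*s) := min_le_right _ _
      have h3 : δ * (2*s) ≤ (2+β)*s - 1 := by
        rw [← le_div_iff₀ (by linarith : (0:ℝ) < 2*s)]
        exact h2
      rw [hγdef]
      nlinarith
    have hp2 : 1 < 2*(1+γ)*s := by nlinarith
    have hcover : E ⊆ ⋃ N : ℕ, ENset γ (N+1) := by
      rintro x ⟨hxI, hxT⟩
      have hev : ∀ᶠ n in Filter.atTop,
          γ < Real.log (lurothDigit (n + 1) x) /
            Real.log (lurothQ (fun m => lurothDigit m x) n) :=
        hxT.eventually (eventually_gt_nhds hγβ)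
      obtain ⟨N₀, hN₀⟩ := Filter.eventually_atTop.1 hev
      refine Set.mem_iUnion.2 ⟨N₀, hxI, ?_⟩
      intro n hn
      have h1 := hN₀ n (by omega)
      have hQ2 : 2 ≤ lurothQ (fun m => lurothDigit m x) n := two_le_Q hxI (by omega)
      have hQ2R : (2:ℝ) ≤ (lurothQ (fun m => lurothDigit m x) n : ℝ) := by
        exact_mod_cast hQ2
      have hQ0 : (0:ℝ) < (lurothQ (fun m => lurothDigit m x) n : ℝ) := by linarith
      have hlogQ : 0 < Real.log (lurothQ (fun m => lurothDigit m x) n : ℝ) :=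
        Real.log_pos (by linarith)
      have h2 : γ * Real.log (lurothQ (fun m => lurothDigit m x) n : ℝ)
          < Real.log (lurothDigit (n+1) x : ℝ) := by
        rw [lt_div_iff₀ hlogQ] at h1
        linarith
      have hd2 : 2 ≤ lurothDigit (n+1) x := two_le_digit hxI n
      have hd0 : (0:ℝ) < (lurothDigit (n+1) x : ℝ) := by
        have : (2:ℝ) ≤ (lurothDigit (n+1) x : ℝ) := by exact_mod_cast hd2
        linarith
      have h3 : (lurothQ (fun m => lurothDigit m x) n : ℝ) ^ γ
          < (lurothDigit (n+1) x : ℝ) := by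
        rw [← Real.log_rpow hQ0 γ] at h2
        exact (Real.log_lt_log_iff (Real.rpow_pos_of_pos hQ0 γ) hd0).1 h2
      exact h3.le
    have hE0 : hcont s E = 0 := by
      refine le_antisymm ((hcont_mono hcover).trans ?_) zero_le
      refine (hcont_iUnion_le hs0 _).trans ?_
      have : ∀ N : ℕ, hcont s (ENset γ (N+1)) = 0 :=
        fun N => ENset_zero hs0 hγ0 hp1 hp2 N
      simp [this]
    exact hausdorffMeasure_zero_of_hcont_zero hs0 hE0
  refine dimH_le fun d hd => ?_
  by_contra hcon
  push_neg at hcon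
  have hd0 : (0:ℝ) < (d:ℝ) := by
    by_contra hd0
    push_neg at hd0
    have : ((d:ℝ≥0):ℝ≥0∞) = 0 := by
      have : d = 0 := by
        apply le_antisymm _ zero_le
        exact_mod_cast hd0
      simp [this]
    rw [this] at hcon
    simp at hcon
  have hlt : 1/(2+β) < (d:ℝ) := by
    by_contra hle
    push_neg at hle
    have : ((d:ℝ≥0):ℝ≥0∞) ≤ ENNReal.ofReal (1/(2+β)) := by
      rw [show ((d:ℝ≥0):ℝ≥0∞) = ENNReal.ofReal (d:ℝ) by
        rw [ENNReal.ofReal_coe_nnreal]]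
      exact ENNReal.ofReal_le_ofReal hle
    exact absurd this (not_le.2 hcon)
  have hzero := main (d:ℝ) hlt
  rw [hd] at hzero
  exact ENNReal.top_ne_zero hzero
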